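/- Let A be a set of infinite regular cardinals with no maximum element, let κ be a regular cardinal with κ ∈ spec(A) and κ ≥ sup(A), and let F ⊆ ∏A be any witness that κ ∈ spec(A) (that is, |F| = κ and every subfamily of F of size κ is unbounded in (∏A, ≤)). Then for every F₀ ⊆ F with |F₀| = κ, the set ub(F₀) of unbounded coordinates of F₀ is infinite. -/

import Mathlib

universe u

open Cardinal Set

namespace TukeySpec

/-- A subset `S` of a preorder is cofinal if every element has an upper bound in `S`. -/
def IsCofinal {P : Type*} [Preorder P] (S : Set P) : Prop :=
  ∀ p : P, ∃ s ∈ S, p ≤ s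

/-- `Q` is a Tukey quotient of `P` (i.e. `P ≥_T Q`): there is a map `P → Q`
sending cofinal sets to cofinal sets. -/
def TukeyQuot (P : Type*) (Q : Type*) [Preorder P] [Preorder Q] : Prop :=
  ∃ φ : P → Q, ∀ S : Set P, IsCofinal S → IsCofinal (φ '' S)

/-- `P` has calibre `(κ, l, m)`. -/
def Calibre (P : Type u) [Preorder P] (κ l m : Cardinal.{u}) : Prop :=
  ∀ P' : Set P, #P' = κ → ∃ R ⊆ P', #R = l ∧ ∀ B ⊆ R, #B = m → BddAbove B

/-- `P` has calibre `κ` (the simplified form): every `κ`-sized subset has a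
`κ`-sized subset which is bounded in `P`. -/
def CalibreSimple (P : Type u) [Preorder P] (κ : Cardinal.{u}) : Prop :=
  ∀ P' : Set P, #P' = κ → ∃ R ⊆ P', #R = κ ∧ BddAbove R

/-- The Tukey spectrum of a poset: all regular cardinals `κ` with `P ≥_T κ`,
where `κ` carries its usual (ordinal) ordering. -/
def specPoset (P : Type u) [Preorder P] : Set Cardinal.{u} :=
  {κ | κ.IsRegular ∧ TukeyQuot P ↥(Set.Iio κ.ord)}

/-- The product `∏A` of a set of cardinals: all functions on `A` with
`f a < a` (as ordinals). -/
def piSet (A : Set Cardinal.{0}) : Set (↥A → Ordinal.{0}) :=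
  {f | ∀ a : ↥A, f a < (a : Cardinal).ord}

/-- A family of members of `∏A` is bounded if it has an upper bound in `(∏A, ≤)`
(pointwise order). -/
def BddIn (A : Set Cardinal.{0}) (S : Set (↥A → Ordinal.{0})) : Prop :=
  ∃ h ∈ piSet A, ∀ f ∈ S, ∀ a : ↥A, f a ≤ h a

/-- The Tukey spectrum of a set `A` of regular cardinals: all regular `κ` for which
there is a `κ`-sized family `F ⊆ ∏A` all of whose `κ`-sized subfamilies are
unbounded in `(∏A, ≤)`. -/
def spec (A : Set Cardinal.{0}) : Set Cardinal.{0} :=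
  {κ | κ.IsRegular ∧ ∃ F ⊆ piSet A, #F = Cardinal.lift.{1} κ ∧
    ∀ F₀ ⊆ F, #F₀ = Cardinal.lift.{1} κ → ¬ BddIn A F₀}

/-- `cf(∏A/D)`: the least cardinality of a subset of `∏A` which is cofinal
modulo the ultrafilter `D`. -/
noncomputable def cofUlt (A : Set Cardinal.{0}) (D : Ultrafilter ↥A) : Cardinal.{1} :=
  sInf {c : Cardinal.{1} | ∃ S ⊆ piSet A, #S = c ∧
    ∀ f ∈ piSet A, ∃ g ∈ S, {a : ↥A | f a ≤ g a} ∈ D}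

/-- `pcf(A)`: the set of all cofinalities `cf(∏A/D)` as `D` ranges over
ultrafilters on `A`. -/
def pcf (A : Set Cardinal.{0}) : Set Cardinal.{0} :=
  {κ | ∃ D : Ultrafilter ↥A, Cardinal.lift.{1} κ = cofUlt A D}

/-- `ub(F)`: the set of coordinates `a ∈ A` where the family `F` is unbounded. -/
def ub (A : Set Cardinal.{0}) (F : Set (↥A → Ordinal.{0})) : Set ↥A :=
  {a | ∀ β < (a : Cardinal).ord, ∃ f ∈ F, β < f a}

/-- The strong part of the Tukey spectrum: `l ∈ spec*(A)` iff there is an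
`l`-sized family `F ⊆ ∏A` such that every `l`-sized subfamily has a set of
unbounded coordinates which is unbounded in `sup A`. -/
def specStarMem (A : Set Cardinal.{0}) (l : Cardinal.{0}) : Prop :=
  l.IsRegular ∧ ∃ F ⊆ piSet A, #F = Cardinal.lift.{1} l ∧
    ∀ F₀ ⊆ F, #F₀ = Cardinal.lift.{1} l →
      ∀ β < sSup A, ∃ a ∈ ub A F₀, β < (a : Cardinal)

/-- `κ` is a limit point of the set `X` of cardinals. -/
def IsLimitPt (X : Set Cardinal.{0}) (κ : Cardinal.{0}) : Prop :=
  ∀ β < κ, ∃ x ∈ X, β < x ∧ x < κ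

/-- `C` is a closed unbounded subset of `κ`. -/
def IsClubIn (C : Set Ordinal.{0}) (κ : Ordinal.{0}) : Prop :=
  C ⊆ Set.Iio κ ∧ (∀ β < κ, ∃ o ∈ C, β < o) ∧
    ∀ β < κ, β ≠ 0 → (∀ γ < β, ∃ o ∈ C, γ < o ∧ o < β) → β ∈ C

/-- A set `S` of cardinals is stationary in `κ`: it meets every club of `κ`. -/
def StatIn (S : Set Cardinal.{0}) (κ : Cardinal.{0}) : Prop :=
  ∀ C : Set Ordinal.{0}, IsClubIn C κ.ord → ∃ a ∈ S, a.ord ∈ C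

/-- `κ` is Mahlo: strongly inaccessible and the regular cardinals below `κ`
are stationary in `κ`. -/
def IsMahlo (κ : Cardinal.{0}) : Prop :=
  κ.IsInaccessible ∧ StatIn {a | a < κ ∧ a.IsRegular} κ

/-- `κ` is weakly compact: strongly inaccessible and `κ → (κ)²₂`. -/
def IsWeaklyCompact (κ : Cardinal.{0}) : Prop :=
  κ.IsInaccessible ∧
    ∀ c : Ordinal.{0} → Ordinal.{0} → Bool,
      ∃ H ⊆ Set.Iio κ.ord, #H = Cardinal.lift.{1} κ ∧
        ∃ b : Bool, ∀ α ∈ H, ∀ β ∈ H, α < β → c α β = b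

/-- `θ` carries a Jónsson algebra: there is `F` from finite subsets of `θ` to `θ`
such that `F` applied to finite subsets of any `θ`-sized `H ⊆ θ` covers `θ`. -/
def CarriesJonsson (θ : Cardinal.{0}) : Prop :=
  ∃ F : Finset Ordinal.{0} → Ordinal.{0},
    (∀ s : Finset Ordinal.{0}, (↑s : Set Ordinal) ⊆ Set.Iio θ.ord → F s < θ.ord) ∧
    ∀ H ⊆ Set.Iio θ.ord, #H = Cardinal.lift.{1} θ →
      ∀ γ < θ.ord, ∃ s : Finset Ordinal.{0}, (↑s : Set Ordinal) ⊆ H ∧ F s = γ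

/-- `cf(∏A/J_bd)`: the least cardinality of a subset of `∏A` cofinal modulo
the ideal of bounded subsets of `A`. -/
noncomputable def cofJbd (A : Set Cardinal.{0}) : Cardinal.{1} :=
  sInf {c : Cardinal.{1} | ∃ S ⊆ piSet A, #S = c ∧
    ∀ f ∈ piSet A, ∃ g ∈ S, ∃ b < sSup A, ∀ a : ↥A, b < (a : Cardinal) → f a ≤ g a}

/-- `μ` is a limit cardinal. -/
def IsLimitCard (μ : Cardinal.{0}) : Prop :=
  ℵ₀ ≤ μ ∧ ∀ ν < μ, Order.succ ν < μ

/-- If `A` has no maximum, `κ ∈ spec(A)` is regular with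
`κ ≥ sup A`, and `F` is any witness that `κ ∈ spec(A)`, then every `κ`-sized
subfamily of `F` has infinitely many unbounded coordinates. -/
theorem statement15 (A : Set Cardinal.{0}) (hA : ∀ a ∈ A, a.IsRegular)
    (hbdd : BddAbove A) (hnomax : ∀ a ∈ A, ∃ b ∈ A, a < b)
    (κ : Cardinal.{0}) (hreg : κ.IsRegular) (hsup : sSup A ≤ κ)
    (F : Set (↥A → Ordinal.{0})) (hF : F ⊆ piSet A)
    (hcard : #F = Cardinal.lift.{1} κ)
    (hwit : ∀ F₀ ⊆ F, #F₀ = Cardinal.lift.{1} κ → ¬ BddIn A F₀) :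
    ∀ F₀ ⊆ F, #F₀ = Cardinal.lift.{1} κ → (ub A F₀).Infinite := by
  intro F₀ hF₀ hcard₀
  by_contra hfin
  rw [Set.not_infinite] at hfin
  have hregL : (Cardinal.lift.{1} κ).IsRegular := by
    constructor
    · rw [← Cardinal.lift_aleph0.{1, 0}]
      exact Cardinal.lift_le.2 hreg.aleph0_le
    · rw [← Cardinal.lift_ord, ← Ordinal.lift_cof]
      exact Cardinal.lift_le.2 hreg.2
  have halt : ∀ a : ↥A, (a : Cardinal) < κ := by
    intro a
    obtain ⟨b, hb, hab⟩ := hnomax a a.2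
    exact hab.trans_le ((le_csSup hbdd hb).trans hsup)
  have hmem : ∀ f ∈ F₀, ∀ a : ↥A, f a < (a : Cardinal).ord :=
    fun f hf a => hF (hF₀ hf) a
  have key : ∀ t : Set ↥A, t.Finite → ∀ G ⊆ F₀, #G = Cardinal.lift.{1} κ →
      ∃ G' ⊆ G, #G' = Cardinal.lift.{1} κ ∧
        ∀ a ∈ t, ∃ β < (a : Cardinal).ord, ∀ f ∈ G', f a ≤ β := by
    intro t ht
    refine Set.Finite.induction_on (motive := fun (t : Set ↥A) _ => ∀ G ⊆ F₀, #G = Cardinal.lift.{1} κ →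
        ∃ G' ⊆ G, #G' = Cardinal.lift.{1} κ ∧
          ∀ a ∈ t, ∃ β < (a : Cardinal).ord, ∀ f ∈ G', f a ≤ β) t ht ?_ ?_
    · intro G hG hGc
      exact ⟨G, Set.Subset.rfl, hGc, by simp⟩
    · intro a t hat htfin IH G hG hGc
      obtain ⟨G₁, hG₁, hG₁c, hbound⟩ := IH G hG hGc
      have hG₁F₀ : G₁ ⊆ F₀ := hG₁.trans hG
      let Φ : ↥G₁ → ↥(Set.Iio (a : Cardinal).ord) :=
        fun f => ⟨f.1 a, hmem f.1 (hG₁F₀ f.2) a⟩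
      have hlt : #(↥(Set.Iio (a : Cardinal).ord)) < (Cardinal.lift.{1} κ).ord.cof := by
        rw [hregL.cof_eq, Ordinal.mk_Iio_ordinal, Cardinal.card_ord]
        exact Cardinal.lift_lt.2 (halt a)
      obtain ⟨c, hc⟩ := Cardinal.infinite_pigeonhole_card Φ (Cardinal.lift.{1} κ)
        hG₁c.ge hregL.aleph0_le hlt
      refine ⟨Subtype.val '' (Φ ⁻¹' {c}), ?_, ?_, ?_⟩
      · exact (Set.image_subset_iff.2 fun g _ => g.2).trans hG₁
      · refine le_antisymm ?_ ?_
        · exact (Cardinal.mk_le_mk_of_subset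
            (Set.image_subset_iff.2 fun g _ => g.2 : _ ⊆ G₁)).trans_eq hG₁c
        · exact hc.trans_eq (Cardinal.mk_image_eq Subtype.val_injective).symm
      · intro a' ha'
        rcases Set.mem_insert_iff.1 ha' with rfl | ha't
        · refine ⟨c.1, c.2, ?_⟩
          rintro f ⟨g, hg, rfl⟩
          have : Φ g = c := hg
          exact le_of_eq (congrArg Subtype.val this)
        · obtain ⟨β, hβ, hb⟩ := hbound a' ha't
          exact ⟨β, hβ, fun f hf => by
            obtain ⟨g, _, rfl⟩ := hf
            exact hb g.1 g.2⟩
  obtain ⟨G', hG'sub, hG'c, hbd⟩ := key (ub A F₀) hfin F₀ Set.Subset.rfl hcard₀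
  have hex : ∀ a : ↥A, ∃ β, β < (a : Cardinal).ord ∧ ∀ f ∈ G', f a ≤ β := by
    intro a
    by_cases hu : a ∈ ub A F₀
    · obtain ⟨β, hβ, h⟩ := hbd a hu
      exact ⟨β, hβ, h⟩
    · simp only [ub, Set.mem_setOf_eq] at hu
      push_neg at hu
      obtain ⟨β, hβ, h⟩ := hu
      exact ⟨β, hβ, fun f hf => h f (hG'sub hf)⟩
  refine hwit G' (hG'sub.trans hF₀) hG'c ⟨fun a => (hex a).choose, ?_, ?_⟩
  · exact fun a => ((hex a).choose_spec).1
  · exact fun f hf a => ((hex a).choose_spec).2 f hf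


end TukeySpec
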